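/- Let B = (L, R, E) be a (deterministic) d-left-regular bipartite graph with |L| = |R| = n, meaning every left node has exactly d neighbors. Let t_d = max{t ≥ 1 : |N(G_t) \ N(G_{t−1})| = d} be the number of greedy iterations whose marginal contribution equals d. Then for all k ≥ t_d, |N(G_k)| ≥ (1 − 1/e + (1/e) · (t_d / (n/d))³) · |N(O_k)|. -/

import Mathlib

open Finset

/-- One step of the greedy algorithm on the bipartite graph whose left nodes are
`Fin n`, right nodes are `Fin m`, and whose neighborhoods are given by `N`.
It adds to the current solution `S` the left node with largest marginal
coverage `|N(u) \ N(S)|`, breaking ties by smallest index. -/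
noncomputable def greedyStep {n m : ℕ} (N : Fin n → Finset (Fin m))
    (S : Finset (Fin n)) : Finset (Fin n) :=
  if h : (Finset.univ \ S).Nonempty then
    insert
      (((Finset.univ \ S).filter fun u =>
          ((N u) \ S.biUnion N).card =
            (Finset.univ \ S).sup fun v => ((N v) \ S.biUnion N).card).min'
        (by
          obtain ⟨u, hu, hsup⟩ :=
            Finset.exists_mem_eq_sup (Finset.univ \ S) h
              (fun v => ((N v) \ S.biUnion N).card)
          exact ⟨u, Finset.mem_filter.mpr ⟨hu, hsup.symm⟩⟩))
      S
  else S

/-- The greedy solution after `k` iterations (`greedy N 0 = ∅`). -/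
noncomputable def greedy {n m : ℕ} (N : Fin n → Finset (Fin m)) : ℕ → Finset (Fin n)
  | 0 => ∅
  | k + 1 => greedyStep N (greedy N k)

/-- The coverage `|N(O_k)|` of an optimal solution with cardinality constraint `k`. -/
def optValue {n m : ℕ} (N : Fin n → Finset (Fin m)) (k : ℕ) : ℕ :=
  (Finset.univ.powerset.filter fun S : Finset (Fin n) => S.card ≤ k).sup
    fun S => (S.biUnion N).card

/-- The sample space of the left-regular random model `LRR(n, d)`: all
neighborhood maps in which every left node has exactly `d` of the `n` right
nodes as neighbors. -/
def lrrGraphs (n d : ℕ) : Finset (Fin n → Finset (Fin n)) :=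
  Finset.univ.filter fun N => ∀ i, (N i).card = d

/-- Expectation of `f` under the left-regular random model `LRR(n, d)`
(uniform distribution on `lrrGraphs n d`). -/
noncomputable def lrrExp (n d : ℕ) (f : (Fin n → Finset (Fin n)) → ℝ) : ℝ :=
  (∑ N ∈ lrrGraphs n d, f N) / (lrrGraphs n d).card

open scoped Classical in
/-- Probability of the event `p` under the left-regular random model `LRR(n, d)`. -/
noncomputable def lrrProb (n d : ℕ) (p : (Fin n → Finset (Fin n)) → Prop) : ℝ :=
  ((lrrGraphs n d).filter p).card / (lrrGraphs n d).card

/-- `t_d`: the last greedy iteration `t ≥ 1` whose marginal contribution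
`|N(G_t) \ N(G_{t-1})|` equals `d` (and `0` if no such iteration exists). -/
noncomputable def tLast {n m : ℕ} (N : Fin n → Finset (Fin m)) (d : ℕ) : ℕ :=
  ((Finset.range (n + 1)).filter fun t =>
    1 ≤ t ∧ (((greedy N t).biUnion N) \ ((greedy N (t - 1)).biUnion N)).card = d).sup id

section Aux
variable {n m : ℕ} (N : Fin n → Finset (Fin m))

/-- gain of the greedy step -/
def gGain (S : Finset (Fin n)) : ℕ :=
  (Finset.univ \ S).sup fun v => ((N v) \ S.biUnion N).card

lemma subset_greedyStep (S : Finset (Fin n)) : S ⊆ greedyStep N S := by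
  unfold greedyStep
  split
  · exact Finset.subset_insert _ _
  · exact Finset.Subset.refl _

lemma cov_greedyStep (S : Finset (Fin n)) :
    ((greedyStep N S).biUnion N).card = (S.biUnion N).card + gGain N S := by
  unfold greedyStep
  split
  case isTrue h =>
    set u := ((Finset.univ \ S).filter fun u =>
          ((N u) \ S.biUnion N).card =
            (Finset.univ \ S).sup fun v => ((N v) \ S.biUnion N).card).min' _ with hu
    have humem : u ∈ (Finset.univ \ S).filter fun u =>
          ((N u) \ S.biUnion N).card =
            (Finset.univ \ S).sup fun v => ((N v) \ S.biUnion N).card := Finset.min'_mem _ _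
    have hcard : ((N u) \ S.biUnion N).card = gGain N S := (Finset.mem_filter.mp humem).2
    rw [Finset.biUnion_insert]
    rw [← Finset.card_sdiff_add_card (N u) (S.biUnion N), hcard]
    ring
  case isFalse h =>
    have : Finset.univ \ S = ∅ := Finset.not_nonempty_iff_eq_empty.mp h
    have : gGain N S = 0 := by rw [gGain, this, Finset.sup_empty]; rfl
    rw [this]
    omega
  
lemma sdiff_cov_greedyStep (S : Finset (Fin n)) :
    (((greedyStep N S).biUnion N) \ (S.biUnion N)).card = gGain N S := by
  have hsub : S.biUnion N ⊆ (greedyStep N S).biUnion N :=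
    Finset.biUnion_subset_biUnion_of_subset_left _ (subset_greedyStep N S)
  rw [Finset.card_sdiff_of_subset hsub, cov_greedyStep]
  omega

lemma gGain_mono {S S' : Finset (Fin n)} (h : S ⊆ S') : gGain N S' ≤ gGain N S := by
  apply Finset.sup_le
  intro v hv
  have hv' : v ∈ Finset.univ \ S := by
    simp only [Finset.mem_sdiff, Finset.mem_univ, true_and] at hv ⊢
    exact fun hmem => hv (h hmem)
  calc ((N v) \ S'.biUnion N).card ≤ ((N v) \ S.biUnion N).card := by
        apply Finset.card_le_card
        exact Finset.sdiff_subset_sdiff (Finset.Subset.refl _)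
          (Finset.biUnion_subset_biUnion_of_subset_left _ h)
    _ ≤ gGain N S := Finset.le_sup (f := fun v => ((N v) \ S.biUnion N).card) hv'

lemma gGain_le_d {d : ℕ} (hreg : ∀ i, (N i).card = d) (S : Finset (Fin n)) :
    gGain N S ≤ d := by
  apply Finset.sup_le
  intro v _
  calc ((N v) \ S.biUnion N).card ≤ (N v).card := Finset.card_le_card (Finset.sdiff_subset)
    _ = d := hreg v

lemma greedy_mono {i j : ℕ} (h : i ≤ j) : greedy N i ⊆ greedy N j := by
  induction j with
  | zero => simp_all
  | succ j ih =>
    rcases Nat.lt_or_ge i (j+1) with h' | h'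
    · exact (ih (Nat.lt_succ_iff.mp h')).trans (subset_greedyStep N _)
    · have : i = j + 1 := le_antisymm h h'
      subst this; exact Finset.Subset.refl _

lemma card_greedy_le (t : ℕ) : (greedy N t).card ≤ t := by
  induction t with
  | zero => simp [greedy]
  | succ t ih =>
    show (greedyStep N (greedy N t)).card ≤ t + 1
    unfold greedyStep
    split
    · exact le_trans (Finset.card_insert_le _ _) (by omega)
    · omega

end Aux
section Aux2
variable {n m : ℕ} (N : Fin n → Finset (Fin m))

lemma tLast_le_n (d : ℕ) : tLast N d ≤ n := by
  apply Finset.sup_le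
  intro t ht
  simp only [Finset.mem_filter, Finset.mem_range] at ht
  simp only [id_eq]
  omega

lemma cov_tLast {d : ℕ} (hreg : ∀ i, (N i).card = d) :
    ((greedy N (tLast N d)).biUnion N).card = tLast N d * d := by
  set s := (Finset.range (n + 1)).filter fun t =>
    1 ≤ t ∧ (((greedy N t).biUnion N) \ ((greedy N (t - 1)).biUnion N)).card = d with hs
  by_cases hne : s.Nonempty
  · obtain ⟨T, hT, hTeq⟩ := Finset.exists_mem_eq_sup s hne id
    have hTL : tLast N d = T := hTeq
    simp only [hs, Finset.mem_filter, Finset.mem_range] at hT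
    obtain ⟨-, hT1, hTd⟩ := hT
    -- gain at step T-1 is d
    have hstep : greedy N T = greedyStep N (greedy N (T - 1)) := by
      have : T = (T - 1) + 1 := by omega
      rw [this]; rfl
    have hgd : gGain N (greedy N (T - 1)) = d := by
      rw [← sdiff_cov_greedyStep, ← hstep]; exact hTd
    -- all earlier gains are d
    have hg : ∀ t, t ≤ T - 1 → gGain N (greedy N t) = d := by
      intro t ht
      have h1 : gGain N (greedy N t) ≤ d := gGain_le_d N hreg _
      have h2 : d ≤ gGain N (greedy N t) := by
        rw [← hgd]
        exact gGain_mono N (greedy_mono N ht)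
      omega
    have key : ∀ t, t ≤ T → ((greedy N t).biUnion N).card = t * d := by
      intro t ht
      induction t with
      | zero => simp [greedy]
      | succ t ih =>
        have : greedy N (t + 1) = greedyStep N (greedy N t) := rfl
        rw [this, cov_greedyStep, ih (by omega), hg t (by omega)]
        ring
    rw [hTL]
    exact key T le_rfl
  · have : tLast N d = 0 := by
      rw [tLast, ← hs, Finset.not_nonempty_iff_eq_empty.mp hne, Finset.sup_empty]; rfl
    rw [this]
    simp [greedy]

lemma optValue_le_m (k : ℕ) : optValue N k ≤ m := by
  apply Finset.sup_le
  intro S _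
  calc (S.biUnion N).card ≤ Fintype.card (Fin m) := Finset.card_le_univ _
    _ = m := Fintype.card_fin m

lemma optValue_le_kd {d : ℕ} (hreg : ∀ i, (N i).card = d) (k : ℕ) :
    optValue N k ≤ k * d := by
  apply Finset.sup_le
  intro S hS
  simp only [Finset.mem_filter, Finset.mem_powerset] at hS
  calc (S.biUnion N).card ≤ ∑ u ∈ S, (N u).card := Finset.card_biUnion_le
    _ = S.card * d := by simp [hreg, Finset.sum_const, mul_comm]
    _ ≤ k * d := Nat.mul_le_mul_right d hS.2

lemma cov_le_optValue {k t : ℕ} (ht : t ≤ k) :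
    ((greedy N t).biUnion N).card ≤ optValue N k := by
  apply Finset.le_sup (f := fun S : Finset (Fin n) => (S.biUnion N).card)
  simp only [Finset.mem_filter, Finset.mem_powerset]
  exact ⟨Finset.subset_univ _, le_trans (card_greedy_le N t) ht⟩

lemma optValue_le_cov_add (k : ℕ) (S : Finset (Fin n)) :
    optValue N k ≤ (S.biUnion N).card + k * gGain N S := by
  have hne : ((Finset.univ.powerset.filter fun S : Finset (Fin n) => S.card ≤ k)).Nonempty :=
    ⟨∅, by simp⟩
  obtain ⟨O, hO, hOeq⟩ := Finset.exists_mem_eq_sup _ hne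
    (fun S : Finset (Fin n) => (S.biUnion N).card)
  simp only [Finset.mem_filter, Finset.mem_powerset] at hO
  have hmarg : ∀ u : Fin n, ((N u) \ S.biUnion N).card ≤ gGain N S := by
    intro u
    by_cases hu : u ∈ S
    · have : (N u) \ S.biUnion N = ∅ := by
        rw [Finset.sdiff_eq_empty_iff_subset]
        exact Finset.subset_biUnion_of_mem N hu
      simp [this]
    · exact Finset.le_sup (f := fun v => ((N v) \ S.biUnion N).card)
        (by simp [Finset.mem_sdiff, hu])
  have hsub : O.biUnion N ⊆ S.biUnion N ∪ O.biUnion (fun u => (N u) \ S.biUnion N) := by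
    intro r hr
    rw [Finset.mem_union]
    by_cases h : r ∈ S.biUnion N
    · exact Or.inl h
    · right
      rw [Finset.mem_biUnion] at hr ⊢
      obtain ⟨u, hu, hru⟩ := hr
      exact ⟨u, hu, Finset.mem_sdiff.mpr ⟨hru, h⟩⟩
  calc optValue N k = (O.biUnion N).card := hOeq
    _ ≤ (S.biUnion N ∪ O.biUnion (fun u => (N u) \ S.biUnion N)).card :=
        Finset.card_le_card hsub
    _ ≤ (S.biUnion N).card + (O.biUnion (fun u => (N u) \ S.biUnion N)).card :=
        Finset.card_union_le _ _
    _ ≤ (S.biUnion N).card + ∑ u ∈ O, ((N u) \ S.biUnion N).card :=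
        Nat.add_le_add_left Finset.card_biUnion_le _
    _ ≤ (S.biUnion N).card + ∑ _u ∈ O, gGain N S :=
        Nat.add_le_add_left (Finset.sum_le_sum fun u _ => hmarg u) _
    _ = (S.biUnion N).card + O.card * gGain N S := by rw [Finset.sum_const, smul_eq_mul]
    _ ≤ (S.biUnion N).card + k * gGain N S :=
        Nat.add_le_add_left (Nat.mul_le_mul_right _ hO.2) _

end Aux2
section Aux3

lemma exp_le_quadratic {z : ℝ} (h0 : 0 ≤ z) (h1 : z ≤ 1) :
    Real.exp z ≤ 1 + z + z ^ 2 := by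
  have h := Real.exp_bound' h0 h1 (n := 3) (by norm_num)
  have hsum : (∑ m ∈ Finset.range 3, z ^ m / m.factorial) = 1 + z + z ^ 2 / 2 := by
    norm_num [Finset.sum_range_succ, Nat.factorial]
  rw [hsum] at h
  have hz3 : z ^ 3 ≤ z ^ 2 := pow_le_pow_of_le_one h0 h1 (by norm_num)
  norm_num [Nat.factorial] at h
  nlinarith [sq_nonneg z]

lemma key_analytic {z : ℝ} (h0 : 0 ≤ z) (h1 : z ≤ 1) :
    Real.exp z * (1 - z) ≤ 1 - z ^ 3 := by
  have h := exp_le_quadratic h0 h1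
  have : (1 + z + z ^ 2) * (1 - z) = 1 - z ^ 3 := by ring
  calc Real.exp z * (1 - z) ≤ (1 + z + z ^ 2) * (1 - z) :=
        mul_le_mul_of_nonneg_right h (by linarith)
    _ = 1 - z ^ 3 := this

variable {n m : ℕ} (N : Fin n → Finset (Fin m))

lemma recur_step {k : ℕ} (hk : 1 ≤ k) (i : ℕ) :
    (optValue N k : ℝ) - (((greedy N (i + 1)).biUnion N).card : ℝ) ≤
      (1 - 1 / (k : ℝ)) * ((optValue N k : ℝ) - (((greedy N i).biUnion N).card : ℝ)) := by
  have hcov : ((greedy N (i + 1)).biUnion N).card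
      = ((greedy N i).biUnion N).card + gGain N (greedy N i) := cov_greedyStep N _
  have hopt : optValue N k ≤ ((greedy N i).biUnion N).card + k * gGain N (greedy N i) :=
    optValue_le_cov_add N k _
  have hkR : (1 : ℝ) ≤ (k : ℝ) := by exact_mod_cast hk
  have hk0 : (0 : ℝ) < (k : ℝ) := by linarith
  have hcovR : (((greedy N (i + 1)).biUnion N).card : ℝ)
      = (((greedy N i).biUnion N).card : ℝ) + (gGain N (greedy N i) : ℝ) := by
    exact_mod_cast hcov
  have hoptR : (optValue N k : ℝ) ≤ (((greedy N i).biUnion N).card : ℝ)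
      + (k : ℝ) * (gGain N (greedy N i) : ℝ) := by exact_mod_cast hopt
  set O := (optValue N k : ℝ) with hO
  set C := (((greedy N i).biUnion N).card : ℝ) with hC
  set g := (gGain N (greedy N i) : ℝ) with hg
  rw [hcovR]
  have key : (1 - 1 / (k : ℝ)) * (O - C) - (O - (C + g)) = ((k : ℝ) * g - (O - C)) / k := by
    field_simp
    ring
  have h2 : (0:ℝ) ≤ ((k : ℝ) * g - (O - C)) / k := by
    apply div_nonneg _ (le_of_lt hk0)
    linarith
  linarith [key ▸ h2]

lemma recur_iter {k : ℕ} (hk : 1 ≤ k) (T j : ℕ) :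
    (optValue N k : ℝ) - (((greedy N (T + j)).biUnion N).card : ℝ) ≤
      (1 - 1 / (k : ℝ)) ^ j *
        ((optValue N k : ℝ) - (((greedy N T).biUnion N).card : ℝ)) := by
  have hkR : (1 : ℝ) ≤ (k : ℝ) := by exact_mod_cast hk
  have hr0 : (0 : ℝ) ≤ 1 - 1 / (k : ℝ) := by
    have : 1 / (k : ℝ) ≤ 1 := by
      apply div_le_one_of_le₀ hkR (by linarith)
    linarith
  induction j with
  | zero => simp
  | succ j ih =>
    have h1 : T + (j + 1) = (T + j) + 1 := by omega
    rw [h1]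
    calc (optValue N k : ℝ) - (((greedy N ((T + j) + 1)).biUnion N).card : ℝ)
        ≤ (1 - 1 / (k : ℝ)) * ((optValue N k : ℝ) - (((greedy N (T + j)).biUnion N).card : ℝ)) :=
          recur_step N hk _
      _ ≤ (1 - 1 / (k : ℝ)) * ((1 - 1 / (k : ℝ)) ^ j *
            ((optValue N k : ℝ) - (((greedy N T).biUnion N).card : ℝ))) :=
          mul_le_mul_of_nonneg_left ih hr0
      _ = (1 - 1 / (k : ℝ)) ^ (j + 1) *
            ((optValue N k : ℝ) - (((greedy N T).biUnion N).card : ℝ)) := by ring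

end Aux3

set_option maxHeartbeats 1000000 in
/-- **Lemma 3.7 (augmented worst-case analysis).** For a deterministic
`d`-left-regular bipartite graph with `|L| = |R| = n` and all `k ≥ t_d`,
`|N(G_k)| ≥ (1 - 1/e + (1/e)·(t_d/(n/d))³)·|N(O_k)|`. -/
theorem augmented_worst_case (n d : ℕ) (N : Fin n → Finset (Fin n))
    (hreg : ∀ i, (N i).card = d) (k : ℕ) (hk : tLast N d ≤ k) :
    (((greedy N k).biUnion N).card : ℝ) ≥
      (1 - 1 / Real.exp 1 +
          (1 / Real.exp 1) * ((tLast N d : ℝ) / ((n : ℝ) / d)) ^ 3) *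
        (optValue N k : ℝ) := by
  by_cases hopt0 : optValue N k = 0
  · rw [hopt0]
    push_cast
    rw [mul_zero]
    positivity
  -- main case: optValue ≥ 1
  have hOPT1 : 1 ≤ optValue N k := Nat.one_le_iff_ne_zero.mpr hopt0
  have hOkd : optValue N k ≤ k * d := optValue_le_kd N hreg k
  have hOn : optValue N k ≤ n := optValue_le_m N k
  have hd1 : 1 ≤ d := by
    by_contra h
    push_neg at h
    have hd0 : d = 0 := by omega
    subst hd0
    simp at hOkd
    omega
  have hk1 : 1 ≤ k := by
    by_contra h
    push_neg at h
    have hk0 : k = 0 := by omega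
    subst hk0
    simp at hOkd
    omega
  have hn1 : 1 ≤ n := by omega
  have hTk : tLast N d ≤ k := hk
  have covT : ((greedy N (tLast N d)).biUnion N).card = tLast N d * d := cov_tLast N hreg
  have hTdOPT : tLast N d * d ≤ optValue N k := covT ▸ cov_le_optValue N hTk
  have hTdn : tLast N d * d ≤ n := by
    rw [← covT]
    calc ((greedy N (tLast N d)).biUnion N).card ≤ Fintype.card (Fin n) :=
          Finset.card_le_univ _
      _ = n := Fintype.card_fin n
  have hTkadd : tLast N d + (k - tLast N d) = k := by omega
  have hiter := recur_iter N hk1 (tLast N d) (k - tLast N d)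
  rw [hTkadd, covT] at hiter
  -- make everything opaque
  set T := tLast N d with hTdef
  set OPT := optValue N k with hOPTdef
  set CK := ((greedy N k).biUnion N).card with hCKdef
  clear_value T OPT CK
  clear hreg hk covT hopt0 hTkadd hOPTdef hCKdef hTdef
  -- real setup
  have hkR : (1 : ℝ) ≤ (k : ℝ) := by exact_mod_cast hk1
  have hk0 : (0 : ℝ) < (k : ℝ) := by linarith
  have hnR : (0 : ℝ) < (n : ℝ) := by exact_mod_cast hn1
  have hdR : (0 : ℝ) < (d : ℝ) := by exact_mod_cast hd1
  have hOR : (1 : ℝ) ≤ (OPT : ℝ) := by exact_mod_cast hOPT1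
  set x : ℝ := (T : ℝ) * d / n with hx
  set y : ℝ := (T : ℝ) / k with hy
  have hTdOPTR : (T : ℝ) * d ≤ (OPT : ℝ) := by exact_mod_cast hTdOPT
  have hTdnR : (T : ℝ) * d ≤ (n : ℝ) := by exact_mod_cast hTdn
  have hOnR : (OPT : ℝ) ≤ (n : ℝ) := by exact_mod_cast hOn
  have hOkdR : (OPT : ℝ) ≤ (k : ℝ) * d := by exact_mod_cast hOkd
  have hTkR : (T : ℝ) ≤ (k : ℝ) := by exact_mod_cast hTk
  have hT0 : (0 : ℝ) ≤ (T : ℝ) := Nat.cast_nonneg T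
  have hx0 : 0 ≤ x := by positivity
  have hx1 : x ≤ 1 := by rw [hx, div_le_one hnR]; linarith
  have hy0 : 0 ≤ y := by positivity
  have hy1 : y ≤ 1 := by rw [hy, div_le_one hk0]; linarith
  -- the statement ratio equals x
  have hxeq : (T : ℝ) / ((n : ℝ) / d) = x := by
    rw [hx, div_div_eq_mul_div]
  rw [hxeq]
  -- bound the geometric factor by exp(y - 1)
  have hr0 : (0 : ℝ) ≤ 1 - 1 / (k : ℝ) := by
    have : 1 / (k : ℝ) ≤ 1 := div_le_one_of_le₀ hkR (by linarith)
    linarith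
  have hrexp : 1 - 1 / (k : ℝ) ≤ Real.exp (-(1 / (k : ℝ))) := by
    have := Real.add_one_le_exp (-(1 / (k : ℝ)))
    linarith
  have hpow : (1 - 1 / (k : ℝ)) ^ (k - T) ≤ Real.exp (-(1 / (k : ℝ))) ^ (k - T) :=
    pow_le_pow_left₀ hr0 hrexp _
  have hexppow : Real.exp (-(1 / (k : ℝ))) ^ (k - T) = Real.exp (y - 1) := by
    rw [← Real.exp_nat_mul]
    congr 1
    have hcast : ((k - T : ℕ) : ℝ) = (k : ℝ) - T := by
      rw [Nat.cast_sub hTk]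
    rw [hcast, hy]
    field_simp
    ring
  rw [hexppow] at hpow
  have hgap0 : (0 : ℝ) ≤ (OPT : ℝ) - (T : ℝ) * d := by linarith
  have hiter2 : (OPT : ℝ) - (CK : ℝ) ≤
      Real.exp (y - 1) * ((OPT : ℝ) - (T : ℝ) * d) := by
    calc (OPT : ℝ) - (CK : ℝ)
        ≤ (1 - 1 / (k : ℝ)) ^ (k - T) * ((OPT : ℝ) - ((T * d : ℕ) : ℝ)) := hiter
      _ = (1 - 1 / (k : ℝ)) ^ (k - T) * ((OPT : ℝ) - (T : ℝ) * d) := by push_cast; ring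
      _ ≤ Real.exp (y - 1) * ((OPT : ℝ) - (T : ℝ) * d) :=
          mul_le_mul_of_nonneg_right hpow hgap0
  -- the key analytic bound
  have hxOPT : x * (OPT : ℝ) ≤ (T : ℝ) * d := by
    rw [hx, div_mul_eq_mul_div, div_le_iff₀ hnR]
    nlinarith [mul_le_mul_of_nonneg_left hOnR (mul_nonneg hT0 hdR.le)]
  have hyOPT : y * (OPT : ℝ) ≤ (T : ℝ) * d := by
    rw [hy, div_mul_eq_mul_div, div_le_iff₀ hk0]
    nlinarith [mul_le_mul_of_nonneg_left hOkdR hT0]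
  have hmain : Real.exp y * ((OPT : ℝ) - (T : ℝ) * d) ≤
      (1 - x ^ 3) * (OPT : ℝ) := by
    rcases le_total x y with hxy | hyx
    · have h1 : Real.exp y * ((OPT : ℝ) - (T : ℝ) * d) ≤
          Real.exp y * ((1 - y) * (OPT : ℝ)) := by
        apply mul_le_mul_of_nonneg_left _ (Real.exp_pos y).le
        nlinarith
      have h2 : Real.exp y * (1 - y) ≤ 1 - y ^ 3 := key_analytic hy0 hy1
      have h3 : (1 : ℝ) - y ^ 3 ≤ 1 - x ^ 3 := by
        have := pow_le_pow_left₀ hx0 hxy 3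
        linarith
      nlinarith [Real.exp_pos y]
    · have h1 : Real.exp y * ((OPT : ℝ) - (T : ℝ) * d) ≤
          Real.exp x * ((1 - x) * (OPT : ℝ)) := by
        have he : Real.exp y ≤ Real.exp x := Real.exp_le_exp.mpr hyx
        have hgap2 : (OPT : ℝ) - (T : ℝ) * d ≤ (1 - x) * (OPT : ℝ) := by
          nlinarith
        have h1x : (0:ℝ) ≤ (1 - x) * (OPT : ℝ) := by nlinarith
        calc Real.exp y * ((OPT : ℝ) - (T : ℝ) * d)
            ≤ Real.exp y * ((1 - x) * (OPT : ℝ)) :=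
              mul_le_mul_of_nonneg_left hgap2 (Real.exp_pos y).le
          _ ≤ Real.exp x * ((1 - x) * (OPT : ℝ)) :=
              mul_le_mul_of_nonneg_right he h1x
      have h2 : Real.exp x * (1 - x) ≤ 1 - x ^ 3 := key_analytic hx0 hx1
      nlinarith [Real.exp_pos x]
  -- combine
  have he1 : (0 : ℝ) < Real.exp 1 := Real.exp_pos 1
  have hsub : Real.exp (y - 1) = Real.exp y / Real.exp 1 := Real.exp_sub y 1
  have hfinal : (OPT : ℝ) - (CK : ℝ) ≤
      (1 / Real.exp 1) * ((1 - x ^ 3) * (OPT : ℝ)) := by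
    calc (OPT : ℝ) - (CK : ℝ)
        ≤ Real.exp (y - 1) * ((OPT : ℝ) - (T : ℝ) * d) := hiter2
      _ = (1 / Real.exp 1) * (Real.exp y * ((OPT : ℝ) - (T : ℝ) * d)) := by
          rw [hsub]; ring
      _ ≤ (1 / Real.exp 1) * ((1 - x ^ 3) * (OPT : ℝ)) := by
          apply mul_le_mul_of_nonneg_left hmain
          positivity
  have hexpand : (1 - 1 / Real.exp 1 + (1 / Real.exp 1) * x ^ 3) * (OPT : ℝ)
      = (OPT : ℝ) - (1 / Real.exp 1) * ((1 - x ^ 3) * (OPT : ℝ)) := by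
    ring
  rw [ge_iff_le, hexpand]
  linarith
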